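/- Let B : Matrix (Fin n) (Fin m) ℝ be an orientation matrix of a signed graph Σ (every column has exactly two nonzero entries, each ±1, in distinct rows; no two distinct columns have their nonzero entries in the same pair of rows) and let A := D − B * Bᵀ be its adjacency matrix, where D is the diagonal matrix with D i i = (B * Bᵀ) i i. Then the spectral line graph of Σ is balanced if and only if Σ is antibalanced; that is: there exists a diagonal matrix S : Matrix (Fin m) (Fin m) ℝ with all diagonal entries ±1 such that S * (Bᵀ * B − 2•1) * S has all entries nonnegative, if and only if there exists a diagonal matrix s : Matrix (Fin n) (Fin n) ℝ with all diagonal entries ±1 such that s * A * s has all entries nonpositive. -/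

import Mathlib

open Matrix

/-- The spectral line graph of a signed graph `Σ` is balanced if and only if
`Σ` is antibalanced. -/
theorem spectral_line_graph_balanced_iff_antibalanced
    (n m : ℕ) (B : Matrix (Fin n) (Fin m) ℝ)
    (hcol : ∀ e : Fin m, ∃ i j : Fin n, i ≠ j ∧
      (B i e = 1 ∨ B i e = -1) ∧ (B j e = 1 ∨ B j e = -1) ∧
      ∀ k : Fin n, k ≠ i → k ≠ j → B k e = 0)
    (hsupp : ∀ e f : Fin m, (∀ i : Fin n, B i e ≠ 0 ↔ B i f ≠ 0) → e = f) :
    let D : Matrix (Fin n) (Fin n) ℝ := Matrix.diagonal fun i => (B * Bᵀ) i i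
    let A : Matrix (Fin n) (Fin n) ℝ := D - B * Bᵀ
    let LB : Matrix (Fin m) (Fin m) ℝ := Bᵀ * B - (2 : ℝ) • 1
    (∃ S : Matrix (Fin m) (Fin m) ℝ,
      (∀ i j : Fin m, i ≠ j → S i j = 0) ∧
      (∀ i : Fin m, S i i = 1 ∨ S i i = -1) ∧
      ∀ i j : Fin m, 0 ≤ (S * LB * S) i j) ↔
    (∃ s : Matrix (Fin n) (Fin n) ℝ,
      (∀ i j : Fin n, i ≠ j → s i j = 0) ∧
      (∀ i : Fin n, s i i = 1 ∨ s i i = -1) ∧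
      ∀ i j : Fin n, (s * A * s) i j ≤ 0) := by
  intro D A LB
  classical
  -- basic value facts
  have hBval : ∀ (i : Fin n) (e : Fin m), B i e = 0 ∨ B i e = 1 ∨ B i e = -1 := by
    intro i e
    obtain ⟨i₀, j₀, hij, h0, h1, hz⟩ := hcol e
    by_cases hi : i = i₀
    · subst hi; tauto
    · by_cases hj : i = j₀
      · subst hj; tauto
      · left; exact hz i hi hj
  have hBsq : ∀ (i : Fin n) (e : Fin m), B i e ≠ 0 → B i e ^ 2 = 1 := by
    intro i e h
    rcases hBval i e with h0 | h0 | h0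
    · exact absurd h0 h
    · rw [h0]; norm_num
    · rw [h0]; norm_num
  have hpm_mul : ∀ x y : ℝ, (x = 1 ∨ x = -1) → (y = 1 ∨ y = -1) →
      (x * y = 1 ∨ x * y = -1) := by
    rintro x y (rfl | rfl) (rfl | rfl) <;> norm_num
  have hsign : ∀ x y : ℝ, (x = 1 ∨ x = -1) → (y = 1 ∨ y = -1) → 0 ≤ x * y → x = y := by
    rintro x y (rfl | rfl) (rfl | rfl) h <;> revert h <;> norm_num
  -- support characterization
  have hsuppset : ∀ (e : Fin m) (i j : Fin n), i ≠ j → B i e ≠ 0 → B j e ≠ 0 →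
      ∀ k, B k e ≠ 0 ↔ (k = i ∨ k = j) := by
    intro e i j hij hi hj k
    obtain ⟨i₀, j₀, hij₀, h0, h1, hz⟩ := hcol e
    have mem : ∀ l, B l e ≠ 0 → l = i₀ ∨ l = j₀ := by
      intro l hl
      by_contra hc
      push_neg at hc
      exact hl (hz l hc.1 hc.2)
    constructor
    · intro hk
      rcases mem k hk with rfl | rfl <;> rcases mem i hi with rfl | rfl <;>
        rcases mem j hj with rfl | rfl <;> tauto
    · rintro (rfl | rfl) <;> assumption
  -- at most one edge between two vertices
  have huniq : ∀ (e f : Fin m) (i j : Fin n), i ≠ j →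
      B i e ≠ 0 → B j e ≠ 0 → B i f ≠ 0 → B j f ≠ 0 → e = f := by
    intro e f i j hij hie hje hif hjf
    apply hsupp
    intro k
    rw [hsuppset e i j hij hie hje k, hsuppset f i j hij hif hjf k]
  have hsum_e : ∀ (e : Fin m) (i j : Fin n), i ≠ j → B i e ≠ 0 → B j e ≠ 0 →
      ∑ f, B i f * B j f = B i e * B j e := by
    intro e i j hij hi hj
    apply Finset.sum_eq_single_of_mem e (Finset.mem_univ e)
    intro f _ hfe
    by_cases hif : B i f = 0
    · rw [hif]; ring
    by_cases hjf : B j f = 0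
    · rw [hjf]; ring
    exact absurd (huniq e f i j hij hi hj hif hjf).symm hfe
  have hsum_v : ∀ (e f : Fin m) (i : Fin n), e ≠ f → B i e ≠ 0 → B i f ≠ 0 →
      ∑ j, B j e * B j f = B i e * B i f := by
    intro e f i hef hie hif
    apply Finset.sum_eq_single_of_mem i (Finset.mem_univ i)
    intro j _ hji
    by_cases hje : B j e = 0
    · rw [hje]; ring
    by_cases hjf : B j f = 0
    · rw [hjf]; ring
    exact absurd (huniq e f j i hji hje hie hjf hif) hef
  have hcol2 : ∀ e : Fin m, ∑ i, B i e * B i e = 2 := by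
    intro e
    obtain ⟨i₀, j₀, hij, h0, h1, hz⟩ := hcol e
    rw [Finset.sum_eq_add_of_mem i₀ j₀ (Finset.mem_univ _) (Finset.mem_univ _) hij ?_]
    · rcases h0 with h | h <;> rcases h1 with h' | h' <;> rw [h, h'] <;> norm_num
    · intro k _ hk
      rw [hz k hk.1 hk.2]; ring
  constructor
  · -- balanced line graph → antibalanced
    rintro ⟨S, hSoff, hSpm, hSnn⟩
    have hSeq : S = Matrix.diagonal (fun e => S e e) := by
      ext e f
      by_cases h : e = f
      · subst h; simp
      · rw [Matrix.diagonal_apply_ne _ h, hSoff e f h]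
    set t : Fin n → ℝ := fun i =>
      if h : ∃ e, B i e ≠ 0 then S h.choose h.choose * B i h.choose else 1 with ht
    have htpos : ∀ (i : Fin n) (h : ∃ e, B i e ≠ 0),
        t i = S h.choose h.choose * B i h.choose := by
      intro i h
      simp only [ht]
      rw [dif_pos h]
    have htpm : ∀ i, t i = 1 ∨ t i = -1 := by
      intro i
      by_cases h : ∃ e, B i e ≠ 0
      · rw [htpos i h]
        rcases hBval i h.choose with hb | hb | hb
        · exact absurd hb h.choose_spec
        · exact hpm_mul _ _ (hSpm _) (Or.inl hb)
        · exact hpm_mul _ _ (hSpm _) (Or.inr hb)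
      · simp only [ht]
        rw [dif_neg h]
        left; rfl
    have key : ∀ (i : Fin n) (e : Fin m), B i e ≠ 0 → S e e * B i e = t i := by
      intro i e he
      have hex : ∃ e, B i e ≠ 0 := ⟨e, he⟩
      rw [htpos i hex]
      set e₀ := hex.choose with he₀def
      have he₀ : B i e₀ ≠ 0 := hex.choose_spec
      by_cases hee : e = e₀
      · subst hee; rfl
      · have h1 := hSnn e e₀
        rw [hSeq] at h1
        simp only [Matrix.diagonal_mul, Matrix.mul_diagonal] at h1
        have hLB : LB e e₀ = B i e * B i e₀ := by
          show ((Bᵀ * B) - (2 : ℝ) • (1 : Matrix (Fin m) (Fin m) ℝ)) e e₀ = _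
          rw [Matrix.sub_apply, Matrix.smul_apply, Matrix.one_apply_ne hee]
          rw [Matrix.mul_apply]
          simp only [Matrix.transpose_apply]
          rw [hsum_v e e₀ i hee he he₀]
          simp
        rw [hLB] at h1
        apply hsign
        · exact hpm_mul _ _ (hSpm e) (by rcases hBval i e with h | h | h <;> tauto)
        · exact hpm_mul _ _ (hSpm e₀) (by rcases hBval i e₀ with h | h | h <;> tauto)
        · nlinarith [h1]
    have key2 : ∀ (i : Fin n) (e : Fin m), t i * B i e = S e e * B i e ^ 2 := by
      intro i e
      by_cases h : B i e = 0
      · rw [h]; ring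
      · rw [← key i e h]; ring
    refine ⟨Matrix.diagonal t, ?_, ?_, ?_⟩
    · intro i j hij; exact Matrix.diagonal_apply_ne _ hij
    · intro i; simpa using htpm i
    · intro i j
      simp only [Matrix.diagonal_mul, Matrix.mul_diagonal]
      show t i * A i j * t j ≤ 0
      by_cases hij : i = j
      · subst hij
        have : A i i = 0 := by
          show (D - B * Bᵀ) i i = 0
          rw [Matrix.sub_apply]
          show Matrix.diagonal (fun i => (B * Bᵀ) i i) i i - _ = 0
          rw [Matrix.diagonal_apply_eq]
          ring
        rw [this]
        simp
      · have hA : A i j = -(∑ e, B i e * B j e) := by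
          show (D - B * Bᵀ) i j = _
          rw [Matrix.sub_apply]
          show Matrix.diagonal (fun i => (B * Bᵀ) i i) i j - _ = _
          rw [Matrix.diagonal_apply_ne _ hij, Matrix.mul_apply]
          simp only [Matrix.transpose_apply]
          ring
        rw [hA]
        have hexp : t i * -(∑ e, B i e * B j e) * t j
            = -∑ e, (t i * B i e) * (t j * B j e) := by
          rw [mul_neg, neg_mul, Finset.mul_sum, Finset.sum_mul]
          congr 1
          apply Finset.sum_congr rfl
          intro e _
          ring
        rw [hexp]
        apply neg_nonpos_of_nonneg
        apply Finset.sum_nonneg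
        intro e _
        have h2 : (t i * B i e) * (t j * B j e) = (S e e * (B i e * B j e)) ^ 2 := by
          rw [key2 i e, key2 j e]
          have hs2 : S e e ^ 2 = 1 := by
            rcases hSpm e with h | h <;> rw [h] <;> norm_num
          nlinarith [hs2]
        rw [h2]
        positivity
  · -- antibalanced → balanced line graph
    rintro ⟨s, hsoff, hspm, hsle⟩
    have hseq : s = Matrix.diagonal (fun i => s i i) := by
      ext i j
      by_cases h : i = j
      · subst h; simp
      · rw [Matrix.diagonal_apply_ne _ h, hsoff i j h]
    set d : Fin m → ℝ := fun e => s (hcol e).choose (hcol e).choose * B (hcol e).choose e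
      with hd
    have hdpm : ∀ e, d e = 1 ∨ d e = -1 := by
      intro e
      obtain ⟨j₀, hij, h0, h1, hz⟩ := (hcol e).choose_spec
      exact hpm_mul _ _ (hspm _) h0
    have key1 : ∀ (e : Fin m) (i : Fin n), d e * B i e = s i i * B i e ^ 2 := by
      intro e i
      obtain ⟨j₀, hij, h0, h1, hz⟩ := (hcol e).choose_spec
      set i₀ := (hcol e).choose with hi₀
      have hde : d e = s i₀ i₀ * B i₀ e := by
        simp only [hd]
        rfl
      have hne0 : B i₀ e ≠ 0 := by rcases h0 with h | h <;> rw [h] <;> norm_num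
      have hne1 : B j₀ e ≠ 0 := by rcases h1 with h | h <;> rw [h] <;> norm_num
      by_cases hzero : B i e = 0
      · rw [hzero]; ring
      · have hmem : i = i₀ ∨ i = j₀ := by
          by_contra hc
          push_neg at hc
          exact hzero (hz i hc.1 hc.2)
        have heq : s i₀ i₀ * B i₀ e = s j₀ j₀ * B j₀ e := by
          have h1' := hsle i₀ j₀
          rw [hseq] at h1'
          simp only [Matrix.diagonal_mul, Matrix.mul_diagonal] at h1'
          have hA : A i₀ j₀ = -(B i₀ e * B j₀ e) := by
            show (D - B * Bᵀ) i₀ j₀ = _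
            rw [Matrix.sub_apply]
            show Matrix.diagonal (fun k => (B * Bᵀ) k k) i₀ j₀ - _ = _
            rw [Matrix.diagonal_apply_ne _ hij, Matrix.mul_apply]
            simp only [Matrix.transpose_apply]
            rw [hsum_e e i₀ j₀ hij hne0 hne1]
            ring
          rw [hA] at h1'
          apply hsign
          · exact hpm_mul _ _ (hspm i₀) (by rcases hBval i₀ e with h | h | h <;> tauto)
          · exact hpm_mul _ _ (hspm j₀) (by rcases hBval j₀ e with h | h | h <;> tauto)
          · nlinarith [h1']
        rcases hmem with hmem | hmem
        · rw [hmem, hde]; ring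
        · rw [hmem, hde, heq]; ring
    refine ⟨Matrix.diagonal d, ?_, ?_, ?_⟩
    · intro i j hij; exact Matrix.diagonal_apply_ne _ hij
    · intro e; simpa using hdpm e
    · intro e f
      simp only [Matrix.diagonal_mul, Matrix.mul_diagonal]
      show 0 ≤ d e * LB e f * d f
      have hLB : LB e f = (∑ i, B i e * B i f) - (if e = f then (2:ℝ) else 0) := by
        show ((Bᵀ * B) - (2 : ℝ) • (1 : Matrix (Fin m) (Fin m) ℝ)) e f = _
        rw [Matrix.sub_apply, Matrix.smul_apply, Matrix.mul_apply]
        simp only [Matrix.transpose_apply, Matrix.one_apply]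
        by_cases h : e = f <;> simp [h]
      rw [hLB]
      by_cases hef : e = f
      · subst hef
        simp only [if_pos rfl]
        rw [hcol2 e]
        simp
      · simp only [if_neg hef, sub_zero]
        have hexp : d e * (∑ i, B i e * B i f) * d f
            = ∑ i, (d e * B i e) * (d f * B i f) := by
          rw [Finset.mul_sum, Finset.sum_mul]
          apply Finset.sum_congr rfl
          intro i _
          ring
        rw [hexp]
        apply Finset.sum_nonneg
        intro i _
        have h2 : (d e * B i e) * (d f * B i f) = (s i i * (B i e * B i f)) ^ 2 := by
          rw [key1 e i, key1 f i]
          have hs2 : s i i ^ 2 = 1 := by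
            rcases hspm i with h | h <;> rw [h] <;> norm_num
          nlinarith [hs2]
        rw [h2]
        positivity
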